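/- arXiv:1805.04294 — 4 statements merged into one kernel-verified Lean document; each statement's English description precedes it below -/
import Mathlib

section
/- Let A, B, C, D be n×n real matrices such that the block matrix M = fromBlocks A B C D is symplectic (MᵀJM = J), and let h be a symmetric n×n real matrix such that A + B·h is invertible. Then the matrix (C + D·h)·(A + B·h)⁻¹ is symmetric. -/
open Matrix

/-- if `M = fromBlocks A B C D` is symplectic (`Mᵀ·J·M = J`), `h` is symmetric
and `A + B·h` is invertible, then `(C + D·h)·(A + B·h)⁻¹` is symmetric. -/
theorem symplectic_action_preserves_symmetric {n : ℕ}
    (A B C D h : Matrix (Fin n) (Fin n) ℝ)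
    (hM : (Matrix.fromBlocks A B C D)ᵀ * Matrix.J (Fin n) ℝ * Matrix.fromBlocks A B C D =
      Matrix.J (Fin n) ℝ)
    (hh : hᵀ = h) (hinv : IsUnit (A + B * h)) :
    ((C + D * h) * (A + B * h)⁻¹)ᵀ = (C + D * h) * (A + B * h)⁻¹ := by
  rw [Matrix.J, Matrix.fromBlocks_transpose] at hM
  simp only [Matrix.fromBlocks_multiply, Matrix.mul_assoc] at hM
  have e11 := congrArg Matrix.toBlocks₁₁ hM
  have e12 := congrArg Matrix.toBlocks₁₂ hM
  have e21 := congrArg Matrix.toBlocks₂₁ hM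
  have e22 := congrArg Matrix.toBlocks₂₂ hM
  simp only [Matrix.toBlocks_fromBlocks₁₁, Matrix.toBlocks_fromBlocks₁₂,
    Matrix.toBlocks_fromBlocks₂₁, Matrix.toBlocks_fromBlocks₂₂,
    Matrix.mul_zero, Matrix.mul_one, Matrix.mul_neg,
    mul_zero, mul_one, mul_neg, zero_add, add_zero, neg_mul, Matrix.neg_mul,
    ← sub_eq_add_neg] at e11 e12 e21 e22
  have key : (C + D * h)ᵀ * (A + B * h) = (A + B * h)ᵀ * (C + D * h) := by
    rw [← sub_eq_zero]
    have expand : (C + D * h)ᵀ * (A + B * h) - (A + B * h)ᵀ * (C + D * h)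
        = (Cᵀ * A - Aᵀ * C) + (Cᵀ * B - Aᵀ * D) * h + h * (Dᵀ * A - Bᵀ * C)
          + h * ((Dᵀ * B - Bᵀ * D) * h) := by
      simp only [Matrix.transpose_add, Matrix.transpose_mul, hh]
      noncomm_ring
    rw [expand, e11, e12, e21, e22]
    simp
  have hdet : IsUnit (A + B * h).det := (Matrix.isUnit_iff_isUnit_det _).mp hinv
  have hdetT : IsUnit ((A + B * h)ᵀ).det := by rwa [Matrix.det_transpose]
  rw [Matrix.transpose_mul, Matrix.transpose_nonsing_inv]
  have step : (C + D * h)ᵀ = (A + B * h)ᵀ * ((C + D * h) * (A + B * h)⁻¹) := by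
    rw [← Matrix.mul_assoc, ← key, Matrix.mul_assoc, Matrix.mul_nonsing_inv _ hdet,
      Matrix.mul_one]
  rw [step, ← Matrix.mul_assoc, Matrix.nonsing_inv_mul _ hdetT, Matrix.one_mul]
end

section
/- The symplectic group Sp(2n, ℝ) is generated by the three families of block matrices: fromBlocks (Dᵀ)⁻¹ 0 0 D with D ∈ GL(n, ℝ), fromBlocks 1 0 C 1 with C symmetric, and fromBlocks 1 B 0 1 with B symmetric. That is, the subgroup of Sp(2n, ℝ) generated by the set of all such matrices is the whole group Sp(2n, ℝ). -/
open Matrix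
open scoped RealInnerProductSpace

lemma exists_symm_add_unit {n : ℕ} (A C : Matrix (Fin n) (Fin n) ℝ)
    (hsym : Aᵀ * C = Cᵀ * A)
    (hinj : ∀ v : Fin n → ℝ, A *ᵥ v = 0 → C *ᵥ v = 0 → v = 0) :
    ∃ S : Matrix (Fin n) (Fin n) ℝ, Sᵀ = S ∧ IsUnit (A + S * C) := by
  set E := EuclideanSpace ℝ (Fin n)
  set K : Submodule ℝ E := LinearMap.range (Matrix.toEuclideanLin A) with hK
  set V := Kᗮ with hV
  set P : E →L[ℝ] E := V.subtypeL.comp (Submodule.orthogonalProjectionOnto V) with hP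
  set S : Matrix (Fin n) (Fin n) ℝ := (Matrix.toEuclideanLin).symm (P : E →ₗ[ℝ] E) with hS
  have hSv : ∀ v : Fin n → ℝ, S *ᵥ v = P ((WithLp.equiv 2 (Fin n → ℝ)).symm v) := by
    intro v
    have : Matrix.toEuclideanLin S ((WithLp.equiv 2 (Fin n → ℝ)).symm v)
        = P ((WithLp.equiv 2 (Fin n → ℝ)).symm v) := by
      rw [hS, LinearEquiv.apply_symm_apply]; rfl
    have := congrArg (WithLp.equiv 2 (Fin n → ℝ)) this
    simpa [Matrix.toEuclideanLin_apply_piLp_toLp] using this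
  have hPsym : ∀ x y : E, ⟪P x, y⟫ = ⟪x, P y⟫ := by
    have := (isSelfAdjoint_starProjection V)
    intro x y
    exact this.isSymmetric x y
  have hPmem : ∀ x : E, P x ∈ V := fun x => (Submodule.orthogonalProjectionOnto V x).2
  have hPid : ∀ x : E, x ∈ V → P x = x := by
    intro x hx
    exact (Submodule.starProjection_eq_self_iff (K := V)).2 hx
  refine ⟨S, ?_, ?_⟩
  · ext i j
    have h1 : S j i = (P (EuclideanSpace.single i (1:ℝ))) j := by
      have h := congrFun (hSv (Pi.single i 1)) j
      rw [show ((WithLp.equiv 2 (Fin n → ℝ)).symm (Pi.single i 1) : E)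
          = EuclideanSpace.single i (1:ℝ) from rfl] at h
      rw [Matrix.mulVec_single] at h
      simpa using h
    have h2 : S i j = (P (EuclideanSpace.single j (1:ℝ))) i := by
      have h := congrFun (hSv (Pi.single j 1)) i
      rw [show ((WithLp.equiv 2 (Fin n → ℝ)).symm (Pi.single j 1) : E)
          = EuclideanSpace.single j (1:ℝ) from rfl] at h
      rw [Matrix.mulVec_single] at h
      simpa using h
    rw [Matrix.transpose_apply, h1, h2]
    calc P (EuclideanSpace.single i (1:ℝ)) j
        = ⟪EuclideanSpace.single j (1:ℝ), P (EuclideanSpace.single i (1:ℝ))⟫ := by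
          simp [EuclideanSpace.inner_single_left]
      _ = ⟪P (EuclideanSpace.single i (1:ℝ)), EuclideanSpace.single j (1:ℝ)⟫ :=
          real_inner_comm _ _
      _ = ⟪EuclideanSpace.single i (1:ℝ), P (EuclideanSpace.single j (1:ℝ))⟫ := hPsym _ _
      _ = P (EuclideanSpace.single j (1:ℝ)) i := by
          simp [EuclideanSpace.inner_single_left]
  · rw [Matrix.isUnit_iff_isUnit_det, isUnit_iff_ne_zero]
    intro hd
    obtain ⟨v, hv, h0⟩ := (Matrix.exists_mulVec_eq_zero_iff).2 hd
    apply hv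
    rw [Matrix.add_mulVec, ← Matrix.mulVec_mulVec] at h0
    set v' : E := (WithLp.equiv 2 (Fin n → ℝ)).symm v with hv'
    set cv : E := (WithLp.equiv 2 (Fin n → ℝ)).symm (C *ᵥ v) with hcv
    have ha : (WithLp.equiv 2 (Fin n → ℝ)).symm (A *ᵥ v) ∈ K := ⟨v', rfl⟩
    have hw : P cv ∈ V := hPmem cv
    have hsum : (WithLp.equiv 2 (Fin n → ℝ)).symm (A *ᵥ v) + P cv = 0 := by
      have := congrArg (WithLp.equiv 2 (Fin n → ℝ)).symm h0
      rw [hSv] at this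
      simpa [hcv] using this
    have hA0 : (WithLp.equiv 2 (Fin n → ℝ)).symm (A *ᵥ v) = 0 := by
      have hmem : P cv ∈ K := by
        have : P cv = -((WithLp.equiv 2 (Fin n → ℝ)).symm (A *ᵥ v)) := by
          rw [eq_neg_iff_add_eq_zero, add_comm]; exact hsum
        rw [this]; exact K.neg_mem ha
      have : P cv = 0 := by
        have := Submodule.orthogonal_disjoint K
        exact (Submodule.disjoint_def.1 this) _ hmem hw
      rw [this, add_zero] at hsum; exact hsum
    have hAv : A *ᵥ v = 0 := by
      have := congrArg (WithLp.equiv 2 (Fin n → ℝ)) hA0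
      simpa using this
    have hcvV : cv ∈ V := by
      rw [hV, Submodule.mem_orthogonal]
      rintro u ⟨w, rfl⟩
      have : ⟪Matrix.toEuclideanLin A w, cv⟫
          = (A *ᵥ (WithLp.equiv 2 (Fin n → ℝ)) w) ⬝ᵥ (C *ᵥ v) := by
        simp [PiLp.inner_apply, Matrix.toEuclideanLin_apply, hcv, dotProduct, mul_comm]
      rw [this]
      have hAtC : Aᵀ *ᵥ (C *ᵥ v) = 0 := by
        rw [Matrix.mulVec_mulVec, hsym, ← Matrix.mulVec_mulVec, hAv, Matrix.mulVec_zero]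
      calc (A *ᵥ (WithLp.equiv 2 (Fin n → ℝ)) w) ⬝ᵥ (C *ᵥ v)
          = ((WithLp.equiv 2 (Fin n → ℝ)) w) ⬝ᵥ (Aᵀ *ᵥ (C *ᵥ v)) := by
            rw [dotProduct_comm, Matrix.dotProduct_mulVec, ← Matrix.mulVec_transpose,
              dotProduct_comm]
        _ = 0 := by rw [hAtC, dotProduct_zero]
    have hC0 : C *ᵥ v = 0 := by
      have h1 : P cv = cv := hPid cv hcvV
      have h2 : P cv = 0 := by
        have : (WithLp.equiv 2 (Fin n → ℝ)).symm (A *ᵥ v) = 0 := hA0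
        rw [this, zero_add] at hsum; exact hsum
      have : cv = 0 := by rw [← h1, h2]
      have := congrArg (WithLp.equiv 2 (Fin n → ℝ)) this
      simpa [hcv] using this
    exact hinj v hAv hC0


variable {n : ℕ}

lemma genD_mem (D : Matrix (Fin n) (Fin n) ℝ) (hD : IsUnit D) :
    fromBlocks (Dᵀ)⁻¹ 0 0 D ∈ Matrix.symplecticGroup (Fin n) ℝ := by
  rw [SymplecticGroup.mem_iff', Matrix.J]
  have hDT : IsUnit Dᵀ := (Matrix.isUnit_transpose _).2 hD
  simp only [fromBlocks_transpose, transpose_zero, fromBlocks_multiply]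
  rw [transpose_nonsing_inv, transpose_transpose]
  simp [Matrix.nonsing_inv_mul _ ((Matrix.isUnit_iff_isUnit_det _).1 hD),
    Matrix.mul_nonsing_inv _ ((Matrix.isUnit_iff_isUnit_det _).1 hDT)]

lemma genC_mem (C : Matrix (Fin n) (Fin n) ℝ) (hC : Cᵀ = C) :
    fromBlocks 1 0 C 1 ∈ Matrix.symplecticGroup (Fin n) ℝ := by
  rw [SymplecticGroup.mem_iff', Matrix.J]
  simp only [fromBlocks_transpose, transpose_zero, transpose_one, fromBlocks_multiply]
  simp [hC]

lemma genB_mem (B : Matrix (Fin n) (Fin n) ℝ) (hB : Bᵀ = B) :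
    fromBlocks 1 B 0 1 ∈ Matrix.symplecticGroup (Fin n) ℝ := by
  rw [SymplecticGroup.mem_iff', Matrix.J]
  simp only [fromBlocks_transpose, transpose_zero, transpose_one, fromBlocks_multiply]
  simp [hB]


variable {n : ℕ}

section rels
variable {A B C D : Matrix (Fin n) (Fin n) ℝ}

lemma sp_rels (h : fromBlocks A B C D ∈ Matrix.symplecticGroup (Fin n) ℝ) :
    Cᵀ * A = Aᵀ * C ∧ Aᵀ * D - Cᵀ * B = 1 ∧ Dᵀ * A - Bᵀ * C = 1 ∧ A * Bᵀ = B * Aᵀ := by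
  have h1 := (SymplecticGroup.mem_iff').1 h
  have h2 := (SymplecticGroup.mem_iff).1 h
  rw [Matrix.J, fromBlocks_transpose, fromBlocks_multiply, fromBlocks_multiply] at h1 h2
  simp only [Matrix.mul_zero, Matrix.mul_one, Matrix.mul_neg, zero_add, add_zero,
    neg_zero, Matrix.zero_mul, Matrix.one_mul, Matrix.neg_mul] at h1 h2
  refine ⟨?_, ?_, ?_, ?_⟩
  · have := congrArg Matrix.toBlocks₁₁ h1
    simp only [Matrix.toBlocks_fromBlocks₁₁] at this
    linear_combination (norm := noncomm_ring) this
  · have := congrArg Matrix.toBlocks₁₂ h1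
    simp only [Matrix.toBlocks_fromBlocks₁₂] at this
    linear_combination (norm := noncomm_ring) -this
  · have := congrArg Matrix.toBlocks₂₁ h1
    simp only [Matrix.toBlocks_fromBlocks₂₁] at this
    linear_combination (norm := noncomm_ring) this
  · have := congrArg Matrix.toBlocks₁₁ h2
    simp only [Matrix.toBlocks_fromBlocks₁₁] at this
    linear_combination (norm := noncomm_ring) -this
end rels

lemma sp_decomp (A B C D : Matrix (Fin n) (Fin n) ℝ)
    (h : fromBlocks A B C D ∈ Matrix.symplecticGroup (Fin n) ℝ) (hA : IsUnit A) :
    ∃ (Cs Bs : Matrix (Fin n) (Fin n) ℝ), Csᵀ = Cs ∧ Bsᵀ = Bs ∧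
      fromBlocks A B C D =
        fromBlocks 1 0 Cs 1 * fromBlocks A 0 0 (Aᵀ)⁻¹ * fromBlocks 1 Bs 0 1 := by
  obtain ⟨r1, r2, r3, r4⟩ := sp_rels h
  have hdet : IsUnit A.det := (Matrix.isUnit_iff_isUnit_det _).1 hA
  have hATdet : IsUnit (Aᵀ).det := (Matrix.isUnit_iff_isUnit_det _).1 ((Matrix.isUnit_transpose _).2 hA)
  have key1 : (Aᵀ)⁻¹ * Cᵀ = C * A⁻¹ := by
    calc (Aᵀ)⁻¹ * Cᵀ = (Aᵀ)⁻¹ * Cᵀ * A * A⁻¹ := (Matrix.mul_nonsing_inv_cancel_right _ _ hdet).symm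
      _ = (Aᵀ)⁻¹ * (Aᵀ * C) * A⁻¹ := by rw [Matrix.mul_assoc ((Aᵀ)⁻¹), r1]
      _ = C * A⁻¹ := by rw [Matrix.nonsing_inv_mul_cancel_left _ _ hATdet]
  have key2 : Bᵀ * (Aᵀ)⁻¹ = A⁻¹ * B := by
    calc Bᵀ * (Aᵀ)⁻¹ = A⁻¹ * (A * Bᵀ) * (Aᵀ)⁻¹ := by
          rw [Matrix.nonsing_inv_mul_cancel_left _ _ hdet]
      _ = A⁻¹ * (B * Aᵀ) * (Aᵀ)⁻¹ := by rw [r4]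
      _ = A⁻¹ * B := by rw [Matrix.mul_assoc (A⁻¹), Matrix.mul_assoc,
          Matrix.mul_nonsing_inv _ hATdet, Matrix.mul_one]
  have hD : D = (Aᵀ)⁻¹ + (Aᵀ)⁻¹ * (Cᵀ * B) := by
    have h2 : Aᵀ * D = 1 + Cᵀ * B := by linear_combination (norm := noncomm_ring) r2
    calc D = (Aᵀ)⁻¹ * (Aᵀ * D) := (Matrix.nonsing_inv_mul_cancel_left _ _ hATdet).symm
      _ = (Aᵀ)⁻¹ * (1 + Cᵀ * B) := by rw [h2]
      _ = (Aᵀ)⁻¹ + (Aᵀ)⁻¹ * (Cᵀ * B) := by rw [Matrix.mul_add, Matrix.mul_one]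
  refine ⟨C * A⁻¹, A⁻¹ * B, ?_, ?_, ?_⟩
  · rw [Matrix.transpose_mul, Matrix.transpose_nonsing_inv, key1]
  · rw [Matrix.transpose_mul, Matrix.transpose_nonsing_inv, key2]
  · rw [fromBlocks_multiply, fromBlocks_multiply]
    simp only [Matrix.mul_zero, Matrix.mul_one, Matrix.zero_mul, Matrix.one_mul,
      zero_add, add_zero]
    rw [Matrix.nonsing_inv_mul_cancel_right _ _ hdet,
      Matrix.mul_nonsing_inv_cancel_left _ _ hdet,
      ← Matrix.mul_assoc C A⁻¹ B, ← key1, Matrix.mul_assoc, add_comm, ← hD]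



/-- the symplectic group `Sp(2n, ℝ)` (the group of `2n × 2n` real matrices `M`
with `Mᵀ·J·M = J`, i.e. `Matrix.symplecticGroup`, cf. `SymplecticGroup.mem_iff'`) is
generated by the three families `fromBlocks (Dᵀ)⁻¹ 0 0 D` (`D` invertible),
`fromBlocks 1 0 C 1` (`C` symmetric) and `fromBlocks 1 B 0 1` (`B` symmetric). -/
theorem symplecticGroup_generated_by_three_families (n : ℕ) :
    Subgroup.closure
      { M : Matrix.symplecticGroup (Fin n) ℝ |
        (∃ D : Matrix (Fin n) (Fin n) ℝ, IsUnit D ∧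
          (M : Matrix (Fin n ⊕ Fin n) (Fin n ⊕ Fin n) ℝ) = Matrix.fromBlocks (Dᵀ)⁻¹ 0 0 D) ∨
        (∃ C : Matrix (Fin n) (Fin n) ℝ, Cᵀ = C ∧
          (M : Matrix (Fin n ⊕ Fin n) (Fin n ⊕ Fin n) ℝ) = Matrix.fromBlocks 1 0 C 1) ∨
        (∃ B : Matrix (Fin n) (Fin n) ℝ, Bᵀ = B ∧
          (M : Matrix (Fin n ⊕ Fin n) (Fin n ⊕ Fin n) ℝ) = Matrix.fromBlocks 1 B 0 1) } =
      ⊤ := by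
  set gens : Set (Matrix.symplecticGroup (Fin n) ℝ) :=
      { M : Matrix.symplecticGroup (Fin n) ℝ |
        (∃ D : Matrix (Fin n) (Fin n) ℝ, IsUnit D ∧
          (M : Matrix (Fin n ⊕ Fin n) (Fin n ⊕ Fin n) ℝ) = Matrix.fromBlocks (Dᵀ)⁻¹ 0 0 D) ∨
        (∃ C : Matrix (Fin n) (Fin n) ℝ, Cᵀ = C ∧
          (M : Matrix (Fin n ⊕ Fin n) (Fin n ⊕ Fin n) ℝ) = Matrix.fromBlocks 1 0 C 1) ∨
        (∃ B : Matrix (Fin n) (Fin n) ℝ, Bᵀ = B ∧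
          (M : Matrix (Fin n ⊕ Fin n) (Fin n ⊕ Fin n) ℝ) = Matrix.fromBlocks 1 B 0 1) }
    with hgens
  rw [eq_top_iff]
  rintro M -
  obtain ⟨A, B, C, D, hM⟩ : ∃ A B C D, (M : Matrix (Fin n ⊕ Fin n) (Fin n ⊕ Fin n) ℝ)
      = fromBlocks A B C D := ⟨_, _, _, _, (fromBlocks_toBlocks _).symm⟩
  have hmem : fromBlocks A B C D ∈ Matrix.symplecticGroup (Fin n) ℝ := hM ▸ M.2
  obtain ⟨r1, r2, r3, r4⟩ := sp_rels hmem
  have hinj : ∀ v, A *ᵥ v = 0 → C *ᵥ v = 0 → v = 0 := by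
    intro v hAv hCv
    have hv : (Dᵀ * A - Bᵀ * C) *ᵥ v = v := by rw [r3, Matrix.one_mulVec]
    rw [Matrix.sub_mulVec, ← Matrix.mulVec_mulVec, ← Matrix.mulVec_mulVec, hAv, hCv,
      Matrix.mulVec_zero, Matrix.mulVec_zero, sub_zero] at hv
    exact hv.symm
  obtain ⟨S, hSsym, hSunit⟩ := exists_symm_add_unit A C r1.symm hinj
  set Uel : Matrix.symplecticGroup (Fin n) ℝ := ⟨fromBlocks 1 S 0 1, genB_mem S hSsym⟩ with hUel
  set N := Uel * M with hNdef
  have hUgen : Uel ∈ gens := by rw [hgens]; exact Or.inr (Or.inr ⟨S, hSsym, rfl⟩)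
  have hUclos : Uel ∈ Subgroup.closure gens := Subgroup.subset_closure hUgen
  have hNcoe : (N : Matrix (Fin n ⊕ Fin n) (Fin n ⊕ Fin n) ℝ)
      = fromBlocks (A + S * C) (B + S * D) C D := by
    rw [hNdef, Submonoid.coe_mul, hUel, hM, fromBlocks_multiply]
    simp
  have hNmem : fromBlocks (A + S * C) (B + S * D) C D ∈ Matrix.symplecticGroup (Fin n) ℝ :=
    hNcoe ▸ N.2
  obtain ⟨Cs, Bs, hCs, hBs, hdec⟩ := sp_decomp _ _ _ _ hNmem hSunit
  set A' := A + S * C with hA'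
  have hA'det : IsUnit A'.det := (Matrix.isUnit_iff_isUnit_det _).1 hSunit
  have hmid_shape : fromBlocks A' 0 0 ((A'ᵀ)⁻¹)
      = fromBlocks (((((A'ᵀ)⁻¹))ᵀ)⁻¹) 0 0 ((A'ᵀ)⁻¹) := by
    rw [Matrix.transpose_nonsing_inv, Matrix.transpose_transpose,
      Matrix.nonsing_inv_nonsing_inv _ hA'det]
  have hmid_unit : IsUnit ((A'ᵀ)⁻¹) :=
    Matrix.isUnit_nonsing_inv_iff.2 ((Matrix.isUnit_transpose _).2 hSunit)
  have hmid_mem : fromBlocks A' 0 0 ((A'ᵀ)⁻¹) ∈ Matrix.symplecticGroup (Fin n) ℝ := by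
    rw [hmid_shape]; exact genD_mem _ hmid_unit
  set g1 : Matrix.symplecticGroup (Fin n) ℝ := ⟨fromBlocks 1 0 Cs 1, genC_mem Cs hCs⟩
  set g2 : Matrix.symplecticGroup (Fin n) ℝ := ⟨fromBlocks A' 0 0 ((A'ᵀ)⁻¹), hmid_mem⟩
  set g3 : Matrix.symplecticGroup (Fin n) ℝ := ⟨fromBlocks 1 Bs 0 1, genB_mem Bs hBs⟩
  have hN : N = g1 * g2 * g3 := by
    apply Subtype.ext
    rw [Submonoid.coe_mul, Submonoid.coe_mul]
    exact hNcoe.trans hdec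
  have hNclos : N ∈ Subgroup.closure gens := by
    rw [hN]
    refine mul_mem (mul_mem ?_ ?_) ?_ <;> apply Subgroup.subset_closure <;> rw [hgens]
    · exact Or.inr (Or.inl ⟨Cs, hCs, rfl⟩)
    · exact Or.inl ⟨(A'ᵀ)⁻¹, hmid_unit, hmid_shape ▸ rfl⟩
    · exact Or.inr (Or.inr ⟨Bs, hBs, rfl⟩)
  have : M = Uel⁻¹ * N := by rw [hNdef, inv_mul_cancel_left]
  rw [this]
  exact mul_mem (inv_mem hUclos) hNclos
end

section
/- Let K be a field, α ∈ Kⁿ a nonzero vector, and h a symmetric n×n matrix over K. Then the kernel of h contains the hyperplane {v ∈ Kⁿ : α·v = 0} (i.e., α·v = 0 implies h·v = 0) if and only if there exists a scalar c ∈ K such that h = c · (α αᵀ), the scalar multiple of the outer product of α with itself. -/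
open Matrix

/-- for a nonzero vector `α` and a symmetric matrix `h`, the kernel of `h`
contains the hyperplane `{v : α·v = 0}` iff `h` is a scalar multiple of the outer product
`α αᵀ` (whose `(i,j)` entry is `αᵢ·αⱼ`, i.e. `Matrix.vecMulVec α α`). -/
theorem ker_contains_hyperplane_iff_square_of_lin_form {K : Type*} [Field K] {n : ℕ}
    (α : Fin n → K) (hα : α ≠ 0) (h : Matrix (Fin n) (Fin n) K) (hh : hᵀ = h) :
    (∀ v : Fin n → K, α ⬝ᵥ v = 0 → h *ᵥ v = 0) ↔
      ∃ c : K, h = c • Matrix.vecMulVec α α := by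
  constructor
  · intro H
    obtain ⟨k, hk⟩ := Function.ne_iff.mp hα
    simp only [Pi.zero_apply] at hk
    have key : ∀ i j, α k * h i j = α j * h i k := by
      intro i j
      have hv : α ⬝ᵥ (α k • (Pi.single j 1 : Fin n → K) - α j • (Pi.single k 1 : Fin n → K)) = 0 := by
        simp [dotProduct_sub, dotProduct_single]
        ring
      have h0 := congrFun (H _ hv) i
      have : h i ⬝ᵥ (α k • (Pi.single j 1 : Fin n → K) - α j • (Pi.single k 1 : Fin n → K)) = 0 := h0
      simpa [dotProduct_sub, dotProduct_single, sub_eq_zero, mul_comm] using this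
    refine ⟨h k k / (α k * α k), ?_⟩
    ext i j
    have h1 := key i j
    have h2 := key k i
    have hik : h i k = h k i := by
      conv_lhs => rw [← hh]
      rfl
    rw [hik] at h1
    simp only [Matrix.smul_apply, vecMulVec_apply, smul_eq_mul]
    field_simp
    -- goal should be polynomial identity
    linear_combination α k * h1 + α j * h2
  · rintro ⟨c, rfl⟩ v hv
    ext i
    simp only [mulVec, Pi.zero_apply, Matrix.smul_apply, vecMulVec_apply, smul_eq_mul, dotProduct]
    have : ∑ x, c * (α i * α x) * v x = c * α i * (α ⬝ᵥ v) := by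
      simp only [dotProduct, Finset.mul_sum]
      exact Finset.sum_congr rfl fun x _ => by ring
    rw [this, hv, mul_zero]
end

section
/- The Plücker map is injective on decomposable n-vectors: let V be a finite-dimensional vector space over a field K, and let v, w : Fin n → V be two linearly independent families. If the wedge products v₁ ∧ ⋯ ∧ vₙ and w₁ ∧ ⋯ ∧ wₙ in the n-th exterior power ⋀ⁿ V are proportional by a nonzero scalar (i.e., v₁ ∧ ⋯ ∧ vₙ = c • (w₁ ∧ ⋯ ∧ wₙ) for some c ≠ 0 in K), then span{v₁, …, vₙ} = span{w₁, …, wₙ}. -/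
open ExteriorAlgebra

/-- The `ιMulti` of a linearly independent family is nonzero. -/
lemma ιMulti_ne_zero_of_linearIndependent {K V : Type*} [Field K] [AddCommGroup V]
    [Module K V] {m : ℕ} {u : Fin m → V} (hu : LinearIndependent K u) :
    ExteriorAlgebra.ιMulti K m u ≠ 0 := by
  classical
  -- basis of the span
  let b : Module.Basis (Fin m) K (Submodule.span K (Set.range u)) := Module.Basis.span hu
  obtain ⟨g, hg⟩ := LinearMap.exists_extend (b.equivFun.toLinearMap)
  -- alternating map
  let f : V [⋀^Fin m]→ₗ[K] K := (Matrix.detRowAlternating).compLinearMap g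
  have hfu : f u = 1 := by
    have hgu : ∀ i, g (u i) = Pi.single i 1 := by
      intro i
      have : g ((Submodule.span K (Set.range u)).subtype (b i)) = b.equivFun (b i) := by
        rw [← LinearMap.comp_apply, hg]; rfl
      simpa [b, Module.Basis.span_apply, Module.Basis.equivFun_apply, Pi.single,
        Finsupp.single_eq_pi_single] using this
    have : (fun i => g (u i)) = (1 : Matrix (Fin m) (Fin m) K) := by
      funext i j
      simp [hgu i, Matrix.one_apply, Pi.single_apply, eq_comm]
    simp only [f, AlternatingMap.compLinearMap_apply]
    rw [this]
    exact Matrix.det_one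
  intro h
  have := ExteriorAlgebra.liftAlternating_apply_ιMulti
    (R := K) (M := V) (N := K) (Pi.single m f) u
  rw [h, map_zero, Pi.single_eq_same, hfu] at this
  exact one_ne_zero this.symm

lemma ι_mul_ιMulti {K V : Type*} [Field K] [AddCommGroup V] [Module K V] {n : ℕ}
    (x : V) (w : Fin n → V) :
    ExteriorAlgebra.ι K x * ExteriorAlgebra.ιMulti K n w =
      ExteriorAlgebra.ιMulti K (n + 1) (Fin.cons x w) := by
  rw [ExteriorAlgebra.ιMulti_apply, ExteriorAlgebra.ιMulti_apply, List.ofFn_succ]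
  simp [List.prod_cons]

/-- injectivity of the Plücker map on decomposable `n`-vectors: if `v` and
`w` are linearly independent families of `n` vectors in a finite-dimensional vector space
`V` and `v₁ ∧ ⋯ ∧ vₙ = c • (w₁ ∧ ⋯ ∧ wₙ)` for some nonzero scalar `c` (the wedge products
being taken in the exterior algebra, where they span the `n`-th exterior power `⋀[K]^n V`),
then `span{v₁,…,vₙ} = span{w₁,…,wₙ}`. -/
theorem plucker_injective_on_decomposables {K V : Type*} [Field K] [AddCommGroup V]
    [Module K V] [FiniteDimensional K V] {n : ℕ} (v w : Fin n → V)
    (hv : LinearIndependent K v) (hw : LinearIndependent K w) (c : K) (hc : c ≠ 0)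
    (hvw : ExteriorAlgebra.ιMulti K n v = c • ExteriorAlgebra.ιMulti K n w) :
    Submodule.span K (Set.range v) = Submodule.span K (Set.range w) := by
  classical
  have key : ∀ i, v i ∈ Submodule.span K (Set.range w) := by
    intro i
    by_contra hx
    have hli : LinearIndependent K (Fin.cons (v i) w) :=
      linearIndependent_fin_cons.2 ⟨hw, hx⟩
    have hne := ιMulti_ne_zero_of_linearIndependent hli
    apply hne
    rw [← ι_mul_ιMulti]
    have hzero : ExteriorAlgebra.ι K (v i) * ExteriorAlgebra.ιMulti K n v = 0 := by
      rw [ι_mul_ιMulti]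
      exact (ExteriorAlgebra.ιMulti K (n + 1)).map_eq_zero_of_eq (Fin.cons (v i) v)
        (i := 0) (j := i.succ) (by simp) (fun h => Fin.succ_ne_zero i h.symm)
    have : ExteriorAlgebra.ι K (v i) * (c • ExteriorAlgebra.ιMulti K n w) = 0 := by
      rw [← hvw]; exact hzero
    rw [mul_smul_comm] at this
    exact (smul_eq_zero.1 this).resolve_left hc
  have hle : Submodule.span K (Set.range v) ≤ Submodule.span K (Set.range w) := by
    rw [Submodule.span_le]
    rintro _ ⟨i, rfl⟩
    exact key i
  apply Submodule.eq_of_le_of_finrank_le hle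
  rw [finrank_span_eq_card hv, finrank_span_eq_card hw]
end
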